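/- (McDiarmid's inequality) Let S = (Z_1,...,Z_m) be i.i.d. random variables and Φ : Z^m → ℝ a measurable function such that replacing the i-th coordinate changes the value of Φ by at most o_i. Then for every ε > 0, P[Φ(S) - E[Φ(S)] ≥ ε] ≤ exp(-2ε² / Σ_{i=1}^m o_i²). -/

import Mathlib

open MeasureTheory

section McDiarmidAux

open Real

private lemma mcd_hoeffding_core {p : ℝ} (hp0 : 0 ≤ p) (hp1 : p ≤ 1) (h : ℝ) :
    1 - p + p * exp h ≤ exp (p * h + h ^ 2 / 8) := by
  rcases eq_or_lt_of_le hp0 with hp0' | hp0'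
  · simp only [← hp0', zero_mul, mul_comm, sub_zero, add_zero, zero_add, mul_zero]
    exact one_le_exp (by positivity)
  rcases eq_or_lt_of_le hp1 with hp1' | hp1'
  · subst hp1'
    simp only [sub_self, zero_add, one_mul]
    rw [exp_le_exp]
    nlinarith [sq_nonneg h]
  set F : ℝ → ℝ := fun x => 1 - p + p * exp x with hF
  have hFpos : ∀ x, 0 < F x := fun x => by
    have := exp_pos x; simp only [hF]; nlinarith
  set u : ℝ → ℝ := fun x => p * exp x / F x with hu
  set g : ℝ → ℝ := fun x => Real.log (F x) - p * x - x ^ 2 / 8 with hg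
  set g' : ℝ → ℝ := fun x => u x - p - x / 4 with hg'
  have hFderiv : ∀ x, HasDerivAt F (p * exp x) x := fun x => by
    exact ((hasDerivAt_exp x).const_mul p).const_add (1 - p)
  have hgderiv : ∀ x, HasDerivAt g (g' x) x := fun x => by
    have h1 : HasDerivAt (fun x => Real.log (F x)) (p * exp x / F x) x :=
      (hFderiv x).log (hFpos x).ne'
    have h2 : HasDerivAt (fun x : ℝ => p * x) p x := by
      simpa using (hasDerivAt_id x).const_mul p
    have h3 : HasDerivAt (fun x : ℝ => x ^ 2 / 8) (x / 4) x := by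
      have := (hasDerivAt_pow 2 x).div_const 8
      refine this.congr_deriv ?_; rw [show (2 - 1 : ℕ) = 1 from rfl]; ring
    exact (h1.sub h2).sub h3
  have hg'deriv : ∀ x, HasDerivAt g' (u x * (1 - u x) - 1 / 4) x := fun x => by
    have hnum : HasDerivAt (fun x => p * exp x) (p * exp x) x :=
      (hasDerivAt_exp x).const_mul p
    have hudiv : HasDerivAt u ((p * exp x * F x - p * exp x * (p * exp x)) / (F x) ^ 2) x :=
      hnum.div (hFderiv x) (hFpos x).ne'
    have heq : (p * exp x * F x - p * exp x * (p * exp x)) / (F x) ^ 2 = u x * (1 - u x) := by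
      simp only [hu]
      field_simp [(hFpos x).ne']
    rw [heq] at hudiv
    have h2 : HasDerivAt (fun x : ℝ => p + x / 4) (1 / 4) x := by
      simpa using ((hasDerivAt_id x).div_const 4).const_add p
    have : HasDerivAt (fun x => u x - (p + x / 4)) (u x * (1 - u x) - 1 / 4) x := hudiv.sub h2
    convert this using 2 with y
    simp [hg']; ring
  have hu01 : ∀ x, 0 ≤ u x ∧ u x ≤ 1 := fun x => by
    constructor
    · exact div_nonneg (by positivity) (hFpos x).le
    · rw [div_le_one (hFpos x)]
      simp only [hF]; nlinarith
  have hg'anti : Antitone g' := by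
    apply antitone_of_deriv_nonpos (fun x => (hg'deriv x).differentiableAt)
    intro x
    rw [(hg'deriv x).deriv]
    obtain ⟨h0, h1⟩ := hu01 x
    nlinarith [sq_nonneg (u x - 1/2)]
  have hg'0 : g' 0 = 0 := by
    simp [hg', hu, hF, (by nlinarith : (1:ℝ) - p + p * 1 = 1)]
  have hg0 : g 0 = 0 := by
    simp [hg, hF]
  have hgle : g h ≤ 0 := by
    rcases le_total 0 h with hh | hh
    · have : AntitoneOn g (Set.Ici 0) := by
        apply antitoneOn_of_deriv_nonpos (convex_Ici 0)
          (fun x _ => (hgderiv x).differentiableAt.continuousAt.continuousWithinAt)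
          (fun x _ => (hgderiv x).differentiableAt.differentiableWithinAt)
        intro x hx
        rw [(hgderiv x).deriv]
        rw [interior_Ici] at hx
        calc g' x ≤ g' 0 := hg'anti (le_of_lt hx)
          _ = 0 := hg'0
      calc g h ≤ g 0 := this (Set.self_mem_Ici) (by exact hh) hh
        _ = 0 := hg0
    · have : MonotoneOn g (Set.Iic 0) := by
        apply monotoneOn_of_deriv_nonneg (convex_Iic 0)
          (fun x _ => (hgderiv x).differentiableAt.continuousAt.continuousWithinAt)
          (fun x _ => (hgderiv x).differentiableAt.differentiableWithinAt)
        intro x hx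
        rw [(hgderiv x).deriv]
        rw [interior_Iic] at hx
        calc (0:ℝ) = g' 0 := hg'0.symm
          _ ≤ g' x := hg'anti (le_of_lt hx)
      calc g h ≤ g 0 := this (by exact hh) Set.self_mem_Iic hh
        _ = 0 := hg0
  have : Real.log (F h) ≤ p * h + h ^ 2 / 8 := by
    have := hgle; simp only [hg] at this; linarith
  calc F h = exp (Real.log (F h)) := (exp_log (hFpos h)).symm
    _ ≤ exp (p * h + h ^ 2 / 8) := exp_le_exp.mpr this

private lemma mcd_integrable_of_abs_le {α : Type*} [MeasurableSpace α] (μ : Measure α)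
    [IsFiniteMeasure μ] (f : α → ℝ) (hm : AEStronglyMeasurable f μ) (C : ℝ)
    (h : ∀ x, |f x| ≤ C) : Integrable f μ :=
  (integrable_const C).mono' hm (Filter.Eventually.of_forall fun x => by
    simpa using h x)

private lemma mcd_hoeffding_lemma {𝒵 : Type*} [MeasurableSpace 𝒵] (ν : Measure 𝒵)
    [IsProbabilityMeasure ν] (f : 𝒵 → ℝ) (hf : Measurable f) (c : ℝ)
    (hosc : ∀ z z', f z - f z' ≤ c) (hmean : ∫ z, f z ∂ν = 0) (t : ℝ) :
    ∫ z, exp (t * f z) ∂ν ≤ exp (t ^ 2 * c ^ 2 / 8) := by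
  have hνne : ν Set.univ = 1 := measure_univ
  have hne : Nonempty 𝒵 := by
    by_contra hemp
    rw [not_nonempty_iff] at hemp
    rw [Set.univ_eq_empty_iff.mpr hemp] at hνne
    simp at hνne
  obtain ⟨z₀⟩ := hne
  have hc0 : 0 ≤ c := by simpa using hosc z₀ z₀
  have hbdd : BddBelow (Set.range f) := ⟨f z₀ - c, by
    rintro _ ⟨z, rfl⟩; linarith [hosc z₀ z]⟩
  set a : ℝ := sInf (Set.range f) with ha
  set b : ℝ := a + c with hb
  have hfa : ∀ z, a ≤ f z := fun z => csInf_le hbdd ⟨z, rfl⟩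
  have hfb : ∀ z, f z ≤ b := fun z => by
    have : f z - c ≤ a := le_csInf ⟨f z₀, z₀, rfl⟩ (by
      rintro _ ⟨z', rfl⟩; linarith [hosc z z'])
    simp only [hb]; linarith
  have hfint : Integrable f ν := by
    refine mcd_integrable_of_abs_le ν f hf.aestronglyMeasurable (max |a| |b|) fun z => ?_
    rw [abs_le]
    constructor
    · have := hfa z
      have h1 : -|a| ≤ a := neg_abs_le a
      have := le_max_left |a| |b|
      linarith
    · have := hfb z
      have h1 : b ≤ |b| := le_abs_self b
      have := le_max_right |a| |b|
      linarith
  have hA0 : a ≤ 0 := by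
    by_contra hA
    push_neg at hA
    have : (0:ℝ) < ∫ z, f z ∂ν := by
      calc (0:ℝ) < a := hA
        _ = ∫ _, a ∂ν := by simp
        _ ≤ ∫ z, f z ∂ν := integral_mono (integrable_const a) hfint hfa
    linarith [hmean ▸ this]
  have hB0 : 0 ≤ b := by
    by_contra hB
    push_neg at hB
    have : ∫ z, f z ∂ν < 0 := by
      calc ∫ z, f z ∂ν ≤ ∫ _, b ∂ν := integral_mono hfint (integrable_const b) hfb
        _ = b := by simp
        _ < 0 := hB
    linarith [hmean ▸ this]
  rcases eq_or_lt_of_le hc0 with hc | hc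
  · have hab : b = a := by rw [hb, ← hc]; ring
    have ha0 : a = 0 := by rw [hab] at hB0; linarith
    have hfz : ∀ z, f z = 0 := fun z =>
      le_antisymm (by have := hfb z; rw [hab, ha0] at this; linarith)
        (by have := hfa z; rw [ha0] at this; linarith)
    have : (fun z => exp (t * f z)) = fun _ => (1:ℝ) := funext fun z => by
      rw [hfz z]; simp
    rw [this, integral_const, probReal_univ]
    simp only [ENNReal.toReal_one, smul_eq_mul, one_mul]
    exact one_le_exp (by positivity)
  set p : ℝ := -a / c with hp
  have hp0 : 0 ≤ p := div_nonneg (by linarith) hc.le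
  have hp1 : p ≤ 1 := by
    rw [div_le_one hc]; linarith
  have hap : a = -p * c := by rw [hp, neg_div, neg_neg, div_mul_cancel₀ _ hc.ne']
  have hconv : ∀ z, exp (t * f z) ≤
      (b * exp (t * a) - a * exp (t * b)) / c + f z * ((exp (t * b) - exp (t * a)) / c) := by
    intro z
    have h1 : t * f z = ((b - f z) / c) * (t * a) + ((f z - a) / c) * (t * b) := by
      field_simp; ring
    have h2 := convexOn_exp.2 (Set.mem_univ (t * a)) (Set.mem_univ (t * b))
      (show (0:ℝ) ≤ (b - f z) / c from div_nonneg (by linarith [hfb z]) hc.le)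
      (show (0:ℝ) ≤ (f z - a) / c from div_nonneg (by linarith [hfa z]) hc.le)
      (show (b - f z) / c + (f z - a) / c = 1 by field_simp; rw [hb]; ring)
    rw [h1]
    calc exp (((b - f z) / c) * (t * a) + ((f z - a) / c) * (t * b))
        ≤ ((b - f z) / c) * exp (t * a) + ((f z - a) / c) * exp (t * b) := by
          simpa [smul_eq_mul] using h2
      _ = (b * exp (t * a) - a * exp (t * b)) / c + f z * ((exp (t * b) - exp (t * a)) / c) := by
          field_simp; ring
  have hint1 : Integrable (fun z => exp (t * f z)) ν := by
    refine mcd_integrable_of_abs_le ν _ (hf.const_mul t).exp.aestronglyMeasurable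
      (exp (|t| * max |a| |b|)) fun z => ?_
    rw [abs_exp, exp_le_exp]
    calc t * f z ≤ |t * f z| := le_abs_self _
      _ = |t| * |f z| := abs_mul t (f z)
      _ ≤ |t| * max |a| |b| := by
        refine mul_le_mul_of_nonneg_left ?_ (abs_nonneg t)
        rw [abs_le]
        constructor
        · have := hfa z; have h1 : -|a| ≤ a := neg_abs_le a
          have := le_max_left |a| |b|; linarith
        · have := hfb z; have h1 : b ≤ |b| := le_abs_self b
          have := le_max_right |a| |b|; linarith
  have hint2 : Integrable (fun z => (b * exp (t * a) - a * exp (t * b)) / c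
      + f z * ((exp (t * b) - exp (t * a)) / c)) ν :=
    (integrable_const _).add (hfint.mul_const _)
  have step1 : ∫ z, exp (t * f z) ∂ν ≤ (b * exp (t * a) - a * exp (t * b)) / c := by
    calc ∫ z, exp (t * f z) ∂ν
        ≤ ∫ z, ((b * exp (t * a) - a * exp (t * b)) / c
            + f z * ((exp (t * b) - exp (t * a)) / c)) ∂ν := integral_mono hint1 hint2 hconv
      _ = (b * exp (t * a) - a * exp (t * b)) / c := by
          rw [integral_add (integrable_const _) (hfint.mul_const _), integral_const,
            integral_mul_const, hmean]
          simp
  have hcore := mcd_hoeffding_core hp0 hp1 (t * c)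
  have key : (b * exp (t * a) - a * exp (t * b)) / c ≤ exp (t ^ 2 * c ^ 2 / 8) := by
    have hexpa : 0 < exp (t * a) := exp_pos _
    have hetb : exp (t * b) = exp (t * a) * exp (t * c) := by
      rw [← exp_add]; congr 1; rw [hb]; ring
    have h1 : (b * exp (t * a) - a * exp (t * b)) / c
        = exp (t * a) * (1 - p + p * exp (t * c)) := by
      rw [hetb, hb, hap]; field_simp; ring
    calc (b * exp (t * a) - a * exp (t * b)) / c
        = exp (t * a) * (1 - p + p * exp (t * c)) := h1
      _ ≤ exp (t * a) * exp (p * (t * c) + (t * c) ^ 2 / 8) :=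
          mul_le_mul_of_nonneg_left (hcore) hexpa.le
      _ = exp (t * a + (p * (t * c) + (t * c) ^ 2 / 8)) := (exp_add _ _).symm
      _ = exp (t ^ 2 * c ^ 2 / 8) := by congr 1; rw [hap]; ring
  linarith

private lemma mcd_abs_sub_le_sum {𝒵 : Type*} :
    ∀ {m : ℕ} (Φ : (Fin m → 𝒵) → ℝ) (o : Fin m → ℝ),
    (∀ (i : Fin m) (x : Fin m → 𝒵) (z' : 𝒵),
      |Φ x - Φ (Function.update x i z')| ≤ o i) →
    ∀ x y, |Φ x - Φ y| ≤ ∑ i, o i := by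
  intro m
  induction m with
  | zero =>
    intro Φ o hdiff x y
    have hxy : x = y := funext fun i => i.elim0
    simp [hxy]
  | succ m ih =>
    intro Φ o hdiff x y
    set mid : Fin (m + 1) → 𝒵 := Fin.cons (y 0) (Fin.tail x) with hmid
    have h1 : |Φ x - Φ mid| ≤ o 0 := by
      have h := hdiff 0 x (y 0)
      have hx : Function.update x 0 (y 0) = mid := by
        conv_lhs => rw [← Fin.cons_self_tail x]
        rw [Fin.update_cons_zero]
      rwa [hx] at h
    have h2 : |Φ mid - Φ y| ≤ ∑ i : Fin m, o i.succ := by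
      have hd : ∀ (i : Fin m) (v : Fin m → 𝒵) (z' : 𝒵),
          |Φ (Fin.cons (y 0) v) - Φ (Fin.cons (y 0) (Function.update v i z'))| ≤ o i.succ := by
        intro i v z'
        rw [Fin.cons_update]
        exact hdiff i.succ _ z'
      have := ih (fun v => Φ (Fin.cons (y 0) v)) (fun i => o i.succ) hd (Fin.tail x) (Fin.tail y)
      simpa [hmid, Fin.cons_self_tail] using this
    calc |Φ x - Φ y| ≤ |Φ x - Φ mid| + |Φ mid - Φ y| := abs_sub_le _ _ _
      _ ≤ o 0 + ∑ i : Fin m, o i.succ := add_le_add h1 h2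
      _ = ∑ i, o i := (Fin.sum_univ_succ o).symm

private lemma mcd_mgf_bound {𝒵 : Type*} [MeasurableSpace 𝒵] (ν : Measure 𝒵)
    [IsProbabilityMeasure ν] :
    ∀ (m : ℕ) (Φ : (Fin m → 𝒵) → ℝ), Measurable Φ → ∀ (C : ℝ), (∀ x, |Φ x| ≤ C) →
    ∀ (o : Fin m → ℝ),
    (∀ (i : Fin m) (x : Fin m → 𝒵) (z' : 𝒵),
      |Φ x - Φ (Function.update x i z')| ≤ o i) →
    ∀ t : ℝ,
      ∫ x, exp (t * (Φ x - ∫ y, Φ y ∂(Measure.pi fun _ : Fin m => ν)))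
          ∂(Measure.pi fun _ : Fin m => ν)
        ≤ exp (t ^ 2 * (∑ i, o i ^ 2) / 8) := by
  intro m
  induction m with
  | zero =>
    intro Φ hΦ C hC o hdiff t
    have hconst : Φ = fun _ => Φ Fin.elim0 :=
      funext fun x => by congr 1; exact funext fun i => i.elim0
    rw [hconst]
    simp only [integral_const, probReal_univ, ENNReal.toReal_one, one_smul, sub_self, mul_zero,
      exp_zero, smul_eq_mul, one_mul]
    exact Real.one_le_exp (by positivity)
  | succ m ih =>
    intro Φ hΦ C hC o hdiff t
    set P : Measure (Fin m → 𝒵) := Measure.pi fun _ : Fin m => ν with hP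
    set Pm1 : Measure (Fin (m + 1) → 𝒵) := Measure.pi fun _ : Fin (m + 1) => ν with hPm1
    set E : ℝ := ∫ y, Φ y ∂Pm1 with hE
    -- measurability of the "cons" composition
    have hconsP : Measurable fun q : 𝒵 × (Fin m → 𝒵) => Φ (Fin.cons q.1 q.2) := by
      apply hΦ.comp
      refine measurable_pi_iff.mpr fun i => ?_
      refine Fin.cases ?_ ?_ i
      · simpa using measurable_fst
      · intro j; simpa using measurable_snd.eval
    have hconsL : ∀ x : Fin m → 𝒵, Measurable fun z : 𝒵 => Φ (Fin.cons z x) := by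
      intro x
      apply hΦ.comp
      refine measurable_pi_iff.mpr fun i => ?_
      refine Fin.cases ?_ ?_ i
      · simpa using measurable_id'
      · intro j; simp only [Fin.cons_succ]; exact measurable_const
    set Ψ : (Fin m → 𝒵) → ℝ := fun x => ∫ z, Φ (Fin.cons z x) ∂ν with hΨ
    have hΨm : Measurable Ψ :=
      (hconsP.stronglyMeasurable.integral_prod_left').measurable
    have hΨC : ∀ x, |Ψ x| ≤ C := by
      intro x
      rw [← Real.norm_eq_abs]
      calc ‖Ψ x‖ ≤ ∫ _, C ∂ν :=
            norm_integral_le_of_norm_le (integrable_const C)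
              (Filter.Eventually.of_forall fun z => by simpa using hC (Fin.cons z x))
        _ = C := by simp
    have hcons_int : ∀ x : Fin m → 𝒵, Integrable (fun z => Φ (Fin.cons z x)) ν := fun x =>
      mcd_integrable_of_abs_le ν _ (hconsL x).aestronglyMeasurable C fun z => hC _
    have hdiffΨ : ∀ (i : Fin m) (x : Fin m → 𝒵) (z' : 𝒵),
        |Ψ x - Ψ (Function.update x i z')| ≤ o i.succ := by
      intro i x z'
      have heq : Ψ x - Ψ (Function.update x i z')
          = ∫ z, (Φ (Fin.cons z x) - Φ (Fin.cons z (Function.update x i z'))) ∂ν :=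
        (integral_sub (hcons_int x) (hcons_int _)).symm
      rw [heq, ← Real.norm_eq_abs]
      calc ‖∫ z, (Φ (Fin.cons z x) - Φ (Fin.cons z (Function.update x i z'))) ∂ν‖
          ≤ ∫ _, o i.succ ∂ν := by
            refine norm_integral_le_of_norm_le (integrable_const _)
              (Filter.Eventually.of_forall fun z => ?_)
            rw [Real.norm_eq_abs, Fin.cons_update]
            exact hdiff i.succ _ z'
        _ = o i.succ := by simp
    -- measure preserving between Pm1 and ν.prod P
    have hmp : MeasurePreserving
        (MeasurableEquiv.piFinSuccAbove (fun _ : Fin (m + 1) => 𝒵) 0).symm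
        (ν.prod P) Pm1 :=
      (measurePreserving_piFinSuccAbove (fun _ : Fin (m + 1) => ν) 0).symm _
    have hsymm_apply : ∀ q : 𝒵 × (Fin m → 𝒵),
        (MeasurableEquiv.piFinSuccAbove (fun _ : Fin (m + 1) => 𝒵) 0).symm q
          = Fin.cons q.1 q.2 := by
      intro q
      show (Fin.insertNthEquiv (fun _ : Fin (m + 1) => 𝒵) 0) q = _
      simp [Fin.insertNthEquiv, Fin.insertNth_zero']
    have hcomp : ∀ (g : (Fin (m + 1) → 𝒵) → ℝ),
        ∫ y, g y ∂Pm1 = ∫ q : 𝒵 × (Fin m → 𝒵), g (Fin.cons q.1 q.2) ∂(ν.prod P) := by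
      intro g
      rw [← hmp.integral_comp' g]
      exact integral_congr_ae (Filter.Eventually.of_forall fun q => congrArg g (hsymm_apply q))
    -- E = ∫ Ψ
    have hEeq : E = ∫ x, Ψ x ∂P := by
      rw [hE, hcomp Φ]
      exact integral_prod_symm _ (mcd_integrable_of_abs_le _ _
        hconsP.aestronglyMeasurable C (fun q => hC _))
    -- bound on the integrand
    set B : ℝ := exp (|t| * (C + |E|)) with hB
    have hGbd : ∀ q : 𝒵 × (Fin m → 𝒵), |exp (t * (Φ (Fin.cons q.1 q.2) - E))| ≤ B := by
      intro q
      rw [abs_exp, hB, exp_le_exp]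
      calc t * (Φ (Fin.cons q.1 q.2) - E) ≤ |t * (Φ (Fin.cons q.1 q.2) - E)| := le_abs_self _
        _ = |t| * |Φ (Fin.cons q.1 q.2) - E| := abs_mul _ _
        _ ≤ |t| * (C + |E|) := by
            refine mul_le_mul_of_nonneg_left ?_ (abs_nonneg t)
            calc |Φ (Fin.cons q.1 q.2) - E| ≤ |Φ (Fin.cons q.1 q.2)| + |E| := abs_sub _ _
              _ ≤ C + |E| := by linarith [hC (Fin.cons q.1 q.2)]
    have hGm : Measurable fun q : 𝒵 × (Fin m → 𝒵) => exp (t * (Φ (Fin.cons q.1 q.2) - E)) :=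
      ((hconsP.sub_const E).const_mul t).exp
    have hGint : Integrable (fun q : 𝒵 × (Fin m → 𝒵) => exp (t * (Φ (Fin.cons q.1 q.2) - E)))
        (ν.prod P) := mcd_integrable_of_abs_le _ _ hGm.aestronglyMeasurable B hGbd
    -- step 0 and 1
    have step0 : ∫ x, exp (t * (Φ x - E)) ∂Pm1
        = ∫ x, ∫ z, exp (t * (Φ (Fin.cons z x) - E)) ∂ν ∂P := by
      rw [hcomp fun y => exp (t * (Φ y - E))]
      exact integral_prod_symm _ hGint
    -- pointwise inner bound
    have key : ∀ x, ∫ z, exp (t * (Φ (Fin.cons z x) - E)) ∂ν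
        ≤ exp (t ^ 2 * o 0 ^ 2 / 8) * exp (t * (Ψ x - E)) := by
      intro x
      have hsplit : ∀ z, exp (t * (Φ (Fin.cons z x) - E))
          = exp (t * (Φ (Fin.cons z x) - Ψ x)) * exp (t * (Ψ x - E)) := fun z => by
        rw [← exp_add]; congr 1; ring
      simp_rw [hsplit]
      rw [integral_mul_const]
      refine mul_le_mul_of_nonneg_right ?_ (exp_nonneg _)
      refine mcd_hoeffding_lemma ν (fun z => Φ (Fin.cons z x) - Ψ x)
        ((hconsL x).sub_const _) (o 0) ?_ ?_ t
      · intro z z'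
        have h := hdiff 0 (Fin.cons z x) z'
        rw [Fin.update_cons_zero] at h
        have := le_of_abs_le h
        linarith
      · rw [integral_sub (hcons_int x) (integrable_const _), integral_const]
        simp [hΨ]
    -- integrate the bound
    have hInt1 : Integrable (fun x => ∫ z, exp (t * (Φ (Fin.cons z x) - E)) ∂ν) P := by
      refine mcd_integrable_of_abs_le P _
        (hGm.stronglyMeasurable.integral_prod_left').measurable.aestronglyMeasurable B fun x => ?_
      rw [← Real.norm_eq_abs]
      calc ‖∫ z, exp (t * (Φ (Fin.cons z x) - E)) ∂ν‖ ≤ ∫ _, B ∂ν :=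
            norm_integral_le_of_norm_le (integrable_const B)
              (Filter.Eventually.of_forall fun z => by
                rw [Real.norm_eq_abs]; exact hGbd (z, x))
        _ = B := by simp
    have hInt2 : Integrable (fun x => exp (t ^ 2 * o 0 ^ 2 / 8) * exp (t * (Ψ x - E))) P := by
      refine Integrable.const_mul ?_ _
      refine mcd_integrable_of_abs_le P _
        (((hΨm.sub_const E).const_mul t).exp).aestronglyMeasurable (exp (|t| * (C + |E|)))
        fun x => ?_
      rw [abs_exp, exp_le_exp]
      calc t * (Ψ x - E) ≤ |t * (Ψ x - E)| := le_abs_self _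
        _ = |t| * |Ψ x - E| := abs_mul _ _
        _ ≤ |t| * (C + |E|) := by
            refine mul_le_mul_of_nonneg_left ?_ (abs_nonneg t)
            calc |Ψ x - E| ≤ |Ψ x| + |E| := abs_sub _ _
              _ ≤ C + |E| := by linarith [hΨC x]
    have step2 : ∫ x, ∫ z, exp (t * (Φ (Fin.cons z x) - E)) ∂ν ∂P
        ≤ exp (t ^ 2 * o 0 ^ 2 / 8) * ∫ x, exp (t * (Ψ x - E)) ∂P := by
      rw [← integral_const_mul]
      exact integral_mono hInt1 hInt2 key
    -- apply IH
    have hih := ih Ψ hΨm C hΨC (fun i => o i.succ) hdiffΨ t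
    rw [← hEeq] at hih
    calc ∫ x, exp (t * (Φ x - E)) ∂Pm1
        ≤ exp (t ^ 2 * o 0 ^ 2 / 8) * ∫ x, exp (t * (Ψ x - E)) ∂P := step0 ▸ step2
      _ ≤ exp (t ^ 2 * o 0 ^ 2 / 8) * exp (t ^ 2 * (∑ i : Fin m, o i.succ ^ 2) / 8) :=
          mul_le_mul_of_nonneg_left hih (exp_nonneg _)
      _ = exp (t ^ 2 * (∑ i, o i ^ 2) / 8) := by
          rw [← exp_add]
          congr 1
          rw [Fin.sum_univ_succ fun i => o i ^ 2]
          ring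

end McDiarmidAux

/-- McDiarmid's inequality: let `S = (Z_1,…,Z_m)` be i.i.d. random variables (modelled by
the product measure `ν^m`) and `Φ : Z^m → ℝ` a measurable function satisfying the bounded
differences condition: replacing the `i`-th coordinate changes `Φ` by at most `o i`. Then
for every `ε > 0`,
`P[Φ(S) - E[Φ(S)] ≥ ε] ≤ exp(-2ε² / Σ_i o_i²)`. -/
theorem mcdiarmid_inequality {𝒵 : Type*} [MeasurableSpace 𝒵] (m : ℕ)
    (ν : Measure 𝒵) [IsProbabilityMeasure ν]
    (Φ : (Fin m → 𝒵) → ℝ) (hΦ : Measurable Φ)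
    (o : Fin m → ℝ)
    (hdiff : ∀ (i : Fin m) (x : Fin m → 𝒵) (z' : 𝒵),
      |Φ x - Φ (Function.update x i z')| ≤ o i)
    (ε : ℝ) (hε : 0 < ε) :
    (Measure.pi fun _ : Fin m => ν)
        {x | ε ≤ Φ x - ∫ y, Φ y ∂(Measure.pi fun _ : Fin m => ν)}
      ≤ ENNReal.ofReal (Real.exp (-2 * ε ^ 2 / ∑ i, (o i) ^ 2)) := by
  set μ : Measure (Fin m → 𝒵) := Measure.pi fun _ : Fin m => ν with hμ
  set σ2 : ℝ := ∑ i, o i ^ 2 with hσ2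
  have hσ2nn : 0 ≤ σ2 := Finset.sum_nonneg fun i _ => sq_nonneg _
  rcases eq_or_lt_of_le hσ2nn with hzero | hpos
  · rw [← hzero, div_zero, Real.exp_zero, ENNReal.ofReal_one]
    exact prob_le_one
  -- nonempty 𝒵
  have hνne : ν Set.univ = 1 := measure_univ
  have hne : Nonempty 𝒵 := by
    by_contra hemp
    rw [not_nonempty_iff] at hemp
    rw [Set.univ_eq_empty_iff.mpr hemp] at hνne
    simp at hνne
  have hne' : Nonempty (Fin m → 𝒵) := inferInstance
  obtain ⟨x₀⟩ := hne'
  set C : ℝ := |Φ x₀| + ∑ i, o i with hc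
  have hC : ∀ x, |Φ x| ≤ C := by
    intro x
    have h := mcd_abs_sub_le_sum Φ o hdiff x x₀
    calc |Φ x| = |Φ x - Φ x₀ + Φ x₀| := by ring_nf
      _ ≤ |Φ x - Φ x₀| + |Φ x₀| := abs_add_le _ _
      _ ≤ ∑ i, o i + |Φ x₀| := by linarith
      _ = C := by rw [hc]; ring
  set E : ℝ := ∫ y, Φ y ∂μ with hE
  set X : (Fin m → 𝒵) → ℝ := fun x => Φ x - E with hX
  set t : ℝ := 4 * ε / σ2 with ht
  have ht0 : 0 ≤ t := by positivity
  have hint : Integrable (fun x => Real.exp (t * X x)) μ := by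
    refine mcd_integrable_of_abs_le μ _
      (((hΦ.sub_const E).const_mul t).exp).aestronglyMeasurable
      (Real.exp (|t| * (C + |E|))) fun x => ?_
    rw [Real.abs_exp, Real.exp_le_exp]
    calc t * X x ≤ |t * X x| := le_abs_self _
      _ = |t| * |X x| := abs_mul _ _
      _ ≤ |t| * (C + |E|) := by
          refine mul_le_mul_of_nonneg_left ?_ (abs_nonneg t)
          calc |X x| = |Φ x - E| := rfl
            _ ≤ |Φ x| + |E| := abs_sub _ _
            _ ≤ C + |E| := by linarith [hC x]
  have chernoff := ProbabilityTheory.measure_ge_le_exp_mul_mgf (X := X) (μ := μ) ε ht0 hint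
  have hmgf : ProbabilityTheory.mgf X μ t ≤ Real.exp (t ^ 2 * σ2 / 8) :=
    mcd_mgf_bound ν m Φ hΦ C hC o hdiff t
  have hfinal : (μ {ω | ε ≤ X ω}).toReal ≤ Real.exp (-2 * ε ^ 2 / σ2) := by
    calc (μ {ω | ε ≤ X ω}).toReal ≤ Real.exp (-t * ε) * ProbabilityTheory.mgf X μ t := chernoff
      _ ≤ Real.exp (-t * ε) * Real.exp (t ^ 2 * σ2 / 8) :=
          mul_le_mul_of_nonneg_left hmgf (Real.exp_nonneg _)
      _ = Real.exp (-2 * ε ^ 2 / σ2) := by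
          rw [← Real.exp_add]
          congr 1
          rw [ht]
          field_simp
          ring
  have hne_top : μ {x | ε ≤ Φ x - E} ≠ ⊤ := measure_ne_top _ _
  rw [show {x | ε ≤ Φ x - E} = {ω | ε ≤ X ω} from rfl]
  rw [← ENNReal.ofReal_toReal hne_top]
  exact ENNReal.ofReal_le_ofReal hfinal
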